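/- Let K be a positive integer, Δx := 2π/K, and T > 0. Let ḡ : ℝ^K → ℝ^K be continuous and f̄ : ℝ^K → ℝ^K be continuously differentiable (components indexed by ℤ/Kℤ). Let u : [0,T) → ℝ^K be differentiable with derivative u̇, satisfying the average-difference scheme: for all t ∈ [0,T) and all k ∈ ℤ/Kℤ, (u̇_{k+1}(t) + ḡ_{k+1}(u(t)) − u̇_k(t) − ḡ_k(u(t)))/Δx = (f̄_{k+1}(u(t)) + f̄_k(u(t)))/2. Suppose moreover that ∑_{j=1}^{K} ∑_{k=1}^{K} (∂f̄_j/∂v_k)(u(t)) ≠ 0 for all t ∈ [0,T). Then for all t ∈ [0,T) and all k, u̇_k(t) + ḡ_k(u(t)) = (δ_FD^{-1} f̄(u(t)))_k + 𝒞_d(u(t)). -/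

import Mathlib

open Real Finset

/-- The trapezoidal partial sum `Δx(v₀/2 + ∑_{i=1}^{n−1} vᵢ + vₙ/2)` (with `Δx = 2π/K`
and periodic indexing, so that `v₀ = v_K`). -/
noncomputable def partialTrap (K : ℕ) (v : ZMod K → ℝ) (n : ℕ) : ℝ :=
  (2 * π / K) * (v 0 / 2 + (∑ i ∈ Finset.Ico 1 n, v (i : ZMod K)) + v (n : ZMod K) / 2)

/-- The trapezoidal antiderivative `δ_FD⁻¹`: for `k = 1,…,K` (periodic indexing),
`(δ_FD⁻¹v)_k = Δx(v₀/2 + ∑_{i=1}^{k−1} vᵢ + v_k/2) −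
(Δx²/(2π)) ∑_{i=1}^{K} (v₀/2 + ∑_{j=1}^{i−1} vⱼ + vᵢ/2)`. -/
noncomputable def deltaFDinv (K : ℕ) (v : ZMod K → ℝ) (k : ZMod K) : ℝ :=
  partialTrap K v (if k.val = 0 then K else k.val) -
    (1 / (2 * π)) * (2 * π / K) * ∑ i ∈ Finset.Icc 1 K, partialTrap K v i

/-- The discrete constant `𝒞_d(v)`, determined from the discrete implicit constraint:
`𝒞_d(v) = [∑_{j,k} (∂f̄ⱼ/∂v_k)(v)(ḡ_k(v) − (δ_FD⁻¹f̄(v))_k)] / [∑_{j,k} (∂f̄ⱼ/∂v_k)(v)]`. -/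
noncomputable def Cd (K : ℕ) [NeZero K]
    (fbar gbar : (ZMod K → ℝ) → ZMod K → ℝ) (v : ZMod K → ℝ) : ℝ :=
  (∑ j : ZMod K, ∑ k : ZMod K,
      fderiv ℝ (fun z => fbar z j) v (Pi.single k 1) * (gbar v k - deltaFDinv K (fbar v) k)) /
    (∑ j : ZMod K, ∑ k : ZMod K, fderiv ℝ (fun z => fbar z j) v (Pi.single k 1))

lemma clm_sum {K : ℕ} [NeZero K] (L : (ZMod K → ℝ) →L[ℝ] ℝ) (x : ZMod K → ℝ) :
    L x = ∑ k : ZMod K, x k * L (Pi.single k 1) := by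
  have := L.toLinearMap.pi_apply_eq_sum_univ x
  simp only [ContinuousLinearMap.coe_coe, smul_eq_mul] at this
  rw [this]
  refine Finset.sum_congr rfl fun i _ => ?_
  congr 1
  congr 1
  funext j
  simp [Pi.single_apply, eq_comm]

/-- A solution of the average-difference scheme
`δ⁺ₓ(u̇_k + ḡ_k(u)) = μ⁺ₓ f̄_k(u)` on `[0,T)` satisfying the nondegeneracy condition
`∑_{j,k} (∂f̄ⱼ/∂v_k)(u(t)) ≠ 0` also solves the integral-form scheme
`u̇_k + ḡ_k(u) = (δ_FD⁻¹f̄(u))_k + 𝒞_d(u)`. -/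
theorem averageDifference_to_integral_form (K : ℕ) [NeZero K] (T : ℝ) (hT : 0 < T)
    (gbar fbar : (ZMod K → ℝ) → ZMod K → ℝ)
    (hg : Continuous gbar) (hf : ContDiff ℝ 1 fbar)
    (u udot : ℝ → ZMod K → ℝ)
    (hderiv : ∀ t ∈ Set.Ico (0:ℝ) T, ∀ k : ZMod K,
      HasDerivWithinAt (fun s => u s k) (udot t k) (Set.Ico (0:ℝ) T) t)
    (hscheme : ∀ t ∈ Set.Ico (0:ℝ) T, ∀ k : ZMod K,
      (udot t (k + 1) + gbar (u t) (k + 1) - udot t k - gbar (u t) k) / (2 * π / K) =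
        (fbar (u t) (k + 1) + fbar (u t) k) / 2)
    (hnd : ∀ t ∈ Set.Ico (0:ℝ) T,
      (∑ j : ZMod K, ∑ k : ZMod K,
        fderiv ℝ (fun z => fbar z j) (u t) (Pi.single k 1)) ≠ 0) :
    ∀ t ∈ Set.Ico (0:ℝ) T, ∀ k : ZMod K,
      udot t k + gbar (u t) k = deltaFDinv K (fbar (u t)) k + Cd K fbar gbar (u t) := by
  have hK : (0:ℝ) < K := Nat.cast_pos.mpr (Nat.pos_of_ne_zero (NeZero.ne K))
  have hΔ : (2 * π / (K:ℝ)) ≠ 0 := by positivity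
  -- step form of the scheme
  have hstep : ∀ t ∈ Set.Ico (0:ℝ) T, ∀ k : ZMod K,
      (udot t (k+1) + gbar (u t) (k+1)) - (udot t k + gbar (u t) k) =
        (2 * π / K) * ((fbar (u t) (k+1) + fbar (u t) k) / 2) := by
    intro t ht k
    have h := hscheme t ht k
    rw [div_eq_iff hΔ] at h
    linarith [h]
  -- sum of f vanishes along the solution
  have hsumf : ∀ t ∈ Set.Ico (0:ℝ) T, (∑ j : ZMod K, fbar (u t) j) = 0 := by
    intro t ht
    have h1 : ∑ k : ZMod K, ((udot t (k+1) + gbar (u t) (k+1)) - (udot t k + gbar (u t) k)) = 0 := by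
      rw [Finset.sum_sub_distrib,
        Fintype.sum_equiv (Equiv.addRight (1 : ZMod K))
          (fun k => udot t (k+1) + gbar (u t) (k+1)) (fun k => udot t k + gbar (u t) k)
          (fun k => rfl)]
      ring
    have h2 : ∑ k : ZMod K, ((udot t (k+1) + gbar (u t) (k+1)) - (udot t k + gbar (u t) k)) =
        (2 * π / K) * ∑ k : ZMod K, ((fbar (u t) (k+1) + fbar (u t) k) / 2) := by
      rw [Finset.mul_sum]
      exact Finset.sum_congr rfl fun k _ => hstep t ht k
    have h3 : ∑ k : ZMod K, ((fbar (u t) (k+1) + fbar (u t) k) / 2) =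
        ∑ j : ZMod K, fbar (u t) j := by
      rw [← Finset.sum_div, Finset.sum_add_distrib,
        Fintype.sum_equiv (Equiv.addRight (1 : ZMod K))
          (fun k => fbar (u t) (k+1)) (fun k => fbar (u t) k) (fun k => rfl)]
      ring
    rw [h2, h3] at h1
    exact (mul_eq_zero.mp h1).resolve_left hΔ
  intro t ht k
  -- partial-sum formula by induction
  have hpt : ∀ n : ℕ, udot t ((n+1 : ℕ) : ZMod K) + gbar (u t) ((n+1 : ℕ) : ZMod K) =
      (udot t 0 + gbar (u t) 0) + partialTrap K (fbar (u t)) (n+1) := by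
    intro n
    induction n with
    | zero =>
      have h := hstep t ht 0
      simp only [partialTrap, Finset.Ico_self, Finset.sum_empty]
      push_cast
      simp only [zero_add] at h ⊢
      linarith [h]
    | succ n ih =>
      have h := hstep t ht ((n+1 : ℕ) : ZMod K)
      have hc : (((n+1 : ℕ) : ZMod K) + 1) = ((n+1+1 : ℕ) : ZMod K) := by push_cast; ring
      rw [hc] at h
      have hsum : partialTrap K (fbar (u t)) (n+1+1) = partialTrap K (fbar (u t)) (n+1) +
          (2 * π / K) * ((fbar (u t) ((n+1+1 : ℕ) : ZMod K) + fbar (u t) ((n+1 : ℕ) : ZMod K)) / 2) := by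
        simp only [partialTrap]
        rw [Finset.sum_Ico_succ_top (Nat.le_add_left 1 n)]
        push_cast
        ring
      rw [hsum, ← add_assoc, ← ih]
      linarith [h]
  -- value of w at each index via the partial sums
  have hw : ∀ m : ZMod K, udot t m + gbar (u t) m =
      (udot t 0 + gbar (u t) 0) + partialTrap K (fbar (u t)) (if m.val = 0 then K else m.val) := by
    intro m
    set n : ℕ := if m.val = 0 then K else m.val with hn
    have hn1 : 1 ≤ n := by
      by_cases h : m.val = 0
      · simp only [hn, if_pos h]
        exact Nat.one_le_iff_ne_zero.mpr (NeZero.ne K)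
      · simp only [hn, if_neg h]
        exact Nat.pos_of_ne_zero h
    have hcast : ((n : ℕ) : ZMod K) = m := by
      by_cases h : m.val = 0
      · have hm0 : m = 0 := by
          have := ZMod.natCast_rightInverse (n := K) m
          rw [h] at this
          simpa using this.symm
        simp [hn, h, hm0, ZMod.natCast_self]
      · simp only [hn, if_neg h]
        exact ZMod.natCast_rightInverse m
    obtain ⟨p, hp⟩ : ∃ p : ℕ, n = p + 1 := ⟨n - 1, (Nat.succ_pred_eq_of_pos hn1).symm⟩
    have hthis := hpt p
    rw [← hp, hcast] at hthis
    exact hthis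
  -- the constant C
  set c : ℝ := (1 / (2 * π)) * (2 * π / K) * ∑ i ∈ Finset.Icc 1 K, partialTrap K (fbar (u t)) i with hc
  set C : ℝ := (udot t 0 + gbar (u t) 0) + c with hC
  have hwd : ∀ m : ZMod K, udot t m + gbar (u t) m - deltaFDinv K (fbar (u t)) m = C := by
    intro m
    rw [hw m, deltaFDinv]
    simp only [hC, hc]
    ring
  -- chain rule: derivative of s ↦ ∑ⱼ fⱼ(u s) at t
  have hU : HasDerivWithinAt u (udot t) (Set.Ico (0:ℝ) T) t :=
    hasDerivWithinAt_pi.mpr (hderiv t ht)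
  have hdf : DifferentiableAt ℝ fbar (u t) := (hf.differentiable one_ne_zero) (u t)
  have hdj : ∀ j : ZMod K, DifferentiableAt ℝ (fun z => fbar z j) (u t) :=
    fun j => differentiableAt_pi.mp hdf j
  have hcomp : ∀ j : ZMod K, HasDerivWithinAt (fun s => fbar (u s) j)
      ((fderiv ℝ (fun z => fbar z j) (u t)) (udot t)) (Set.Ico (0:ℝ) T) t :=
    fun j => ((hdj j).hasFDerivAt).comp_hasDerivWithinAt t hU
  have hφ : HasDerivWithinAt (fun s => ∑ j : ZMod K, fbar (u s) j)
      (∑ j : ZMod K, (fderiv ℝ (fun z => fbar z j) (u t)) (udot t)) (Set.Ico (0:ℝ) T) t :=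
    HasDerivWithinAt.fun_sum (fun j _ => hcomp j)
  have hφ0 : HasDerivWithinAt (fun s => ∑ j : ZMod K, fbar (u s) j)
      0 (Set.Ico (0:ℝ) T) t :=
    (hasDerivWithinAt_const t _ (0:ℝ)).congr (fun s hs => hsumf s hs) (hsumf t ht)
  have hud : UniqueDiffWithinAt ℝ (Set.Ico (0:ℝ) T) t := (uniqueDiffOn_Ico 0 T) t ht
  have hzero : (∑ j : ZMod K, (fderiv ℝ (fun z => fbar z j) (u t)) (udot t)) = 0 := by
    have e1 := hφ.derivWithin hud
    have e2 := hφ0.derivWithin hud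
    rw [← e1, e2]
  have hzero' : ∑ j : ZMod K, ∑ kk : ZMod K,
      udot t kk * (fderiv ℝ (fun z => fbar z j) (u t)) (Pi.single kk 1) = 0 := by
    rw [← hzero]
    exact (Finset.sum_congr rfl fun j _ =>
      (clm_sum (fderiv ℝ (fun z => fbar z j) (u t)) (udot t)).symm)
  -- compute Cd
  have hDne : (∑ j : ZMod K, ∑ kk : ZMod K,
      (fderiv ℝ (fun z => fbar z j) (u t)) (Pi.single kk 1)) ≠ 0 := hnd t ht
  have hnum : (∑ j : ZMod K, ∑ kk : ZMod K,
      (fderiv ℝ (fun z => fbar z j) (u t)) (Pi.single kk 1) *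
        (gbar (u t) kk - deltaFDinv K (fbar (u t)) kk)) =
      C * (∑ j : ZMod K, ∑ kk : ZMod K,
        (fderiv ℝ (fun z => fbar z j) (u t)) (Pi.single kk 1)) := by
    have hterm : ∀ kk : ZMod K,
        gbar (u t) kk - deltaFDinv K (fbar (u t)) kk = C - udot t kk := by
      intro kk
      have hh := hwd kk
      linarith [hh]
    calc (∑ j : ZMod K, ∑ kk : ZMod K,
          (fderiv ℝ (fun z => fbar z j) (u t)) (Pi.single kk 1) *
            (gbar (u t) kk - deltaFDinv K (fbar (u t)) kk))
        = ∑ j : ZMod K, ∑ kk : ZMod K,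
            (fderiv ℝ (fun z => fbar z j) (u t)) (Pi.single kk 1) * (C - udot t kk) := by
          refine Finset.sum_congr rfl fun j _ => Finset.sum_congr rfl fun kk _ => ?_
          rw [hterm kk]
      _ = C * (∑ j : ZMod K, ∑ kk : ZMod K,
              (fderiv ℝ (fun z => fbar z j) (u t)) (Pi.single kk 1)) -
            ∑ j : ZMod K, ∑ kk : ZMod K,
              udot t kk * (fderiv ℝ (fun z => fbar z j) (u t)) (Pi.single kk 1) := by
          rw [Finset.mul_sum, ← Finset.sum_sub_distrib]
          refine Finset.sum_congr rfl fun j _ => ?_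
          rw [Finset.mul_sum, ← Finset.sum_sub_distrib]
          refine Finset.sum_congr rfl fun kk _ => ?_
          ring
      _ = _ := by rw [hzero']; ring
  have hCd : Cd K fbar gbar (u t) = C := by
    unfold Cd
    rw [hnum]
    exact mul_div_cancel_right₀ C hDne
  rw [hCd]
  have hfin := hwd k
  linarith [hfin]
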